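/- If f is a submodular set function with multilinear extension F, then for every x ∈ [0,1]^E and every nonnegative direction d ≥ 0, the function λ ↦ F(x + λ·d) is concave on the interval of λ for which x + λ·d ∈ [0,1]^E (monotone concavity). -/

import Mathlib

open Finset

/-- The multilinear extension of a set function. -/
noncomputable def mlext {E : Type*} [Fintype E] [DecidableEq E]
    (f : Finset E → ℝ) (x : E → ℝ) : ℝ :=
  ∑ S : Finset E, f S * (∏ i ∈ S, x i) * ∏ i ∈ Sᶜ, (1 - x i)

/-- Monotone concavity: for submodular `f`, the multilinear extension is concave
along any nonnegative direction `d`, on the interval of `λ` keeping `x + λ d` in the cube. -/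

lemma mlext_aux_key {E : Type*} [Fintype E] [DecidableEq E] (f : Finset E → ℝ)
    (hsub : ∀ A B : Finset E, f A + f B ≥ f (A ∪ B) + f (A ∩ B))
    (y d : E → ℝ) (hy : ∀ i, 0 ≤ y i ∧ y i ≤ 1) (hd : ∀ i, 0 ≤ d i)
    (i k : E) (hik : k ≠ i) :
    ∑ S : Finset E,
      f S * ((∏ m ∈ (univ.erase i).erase k, if m ∈ S then y m else 1 - y m) *
        (if k ∈ S then d k else -d k) * (if i ∈ S then d i else -d i)) ≤ 0 := by
  classical
  set u : Finset E := (univ.erase i).erase k with hu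
  have hiu : i ∉ u := by simp [hu, Finset.mem_erase]
  have hku : k ∉ u := by simp [hu, Finset.mem_erase]
  have hik' : i ∉ insert k u := by
    simp only [Finset.mem_insert, not_or]
    exact ⟨fun h => hik h.symm, hiu⟩
  have huniv : insert i (insert k u) = (univ : Finset E) := by
    ext m
    by_cases h1 : m = i
    · simp [h1]
    · by_cases h2 : m = k
      · simp [h2]
      · simp [hu, Finset.mem_insert, Finset.mem_erase, h1, h2]
  set h : Finset E → ℝ := fun S =>
      f S * ((∏ m ∈ u, if m ∈ S then y m else 1 - y m) *
        (if k ∈ S then d k else -d k) * (if i ∈ S then d i else -d i)) with hh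
  have hsplit : ∑ S : Finset E, h S =
      ∑ t ∈ u.powerset, (h t + h (insert k t) + (h (insert i t) + h (insert i (insert k t)))) := by
    rw [← Finset.powerset_univ, ← huniv, Finset.sum_powerset_insert hik',
      Finset.sum_powerset_insert hku, Finset.sum_powerset_insert hku,
      ← Finset.sum_add_distrib, ← Finset.sum_add_distrib, ← Finset.sum_add_distrib]
  rw [hsplit]
  apply Finset.sum_nonpos
  intro t ht
  have htu : t ⊆ u := Finset.mem_powerset.mp ht
  have hit : i ∉ t := fun hmem => hiu (htu hmem)
  have hkt : k ∉ t := fun hmem => hku (htu hmem)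
  set W : ℝ := ∏ m ∈ u, if m ∈ t then y m else 1 - y m with hW
  have hprod : ∀ S : Finset E, (∀ m ∈ u, (m ∈ S ↔ m ∈ t)) →
      (∏ m ∈ u, if m ∈ S then y m else 1 - y m) = W := by
    intro S hS
    exact Finset.prod_congr rfl fun m hm => by rw [if_congr (hS m hm) rfl rfl]
  have hmne : ∀ m ∈ u, m ≠ i ∧ m ≠ k := by
    intro m hm
    exact ⟨fun h => hiu (h ▸ hm), fun h => hku (h ▸ hm)⟩
  have p1 : (∏ m ∈ u, if m ∈ (insert k t) then y m else 1 - y m) = W :=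
    hprod _ (fun m hm => by simp [Finset.mem_insert, (hmne m hm).2])
  have p2 : (∏ m ∈ u, if m ∈ (insert i t) then y m else 1 - y m) = W :=
    hprod _ (fun m hm => by simp [Finset.mem_insert, (hmne m hm).1])
  have p3 : (∏ m ∈ u, if m ∈ (insert i (insert k t)) then y m else 1 - y m) = W :=
    hprod _ (fun m hm => by simp [Finset.mem_insert, (hmne m hm).1, (hmne m hm).2])
  have hikt : i ∉ insert k t := by
    simp only [Finset.mem_insert, not_or]
    exact ⟨fun h => hik h.symm, hit⟩
  have hkit : k ∉ insert i t := by simp [Finset.mem_insert, hkt, hik]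
  have e1 : h t = f t * (W * (-d k) * (-d i)) := by
    simp only [hh]; rw [← hW, if_neg hkt, if_neg hit]
  have e2 : h (insert k t) = f (insert k t) * (W * d k * (-d i)) := by
    simp only [hh]; rw [p1, if_pos (Finset.mem_insert_self k t), if_neg hikt]
  have e3 : h (insert i t) = f (insert i t) * (W * (-d k) * d i) := by
    simp only [hh]; rw [p2, if_neg hkit, if_pos (Finset.mem_insert_self i t)]
  have e4 : h (insert i (insert k t)) = f (insert i (insert k t)) * (W * d k * d i) := by
    simp only [hh]
    rw [p3, if_pos (Finset.mem_insert_of_mem (Finset.mem_insert_self k t)),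
      if_pos (Finset.mem_insert_self i (insert k t))]
  have hunion : insert i t ∪ insert k t = insert i (insert k t) := by
    ext m; simp [Finset.mem_insert, Finset.mem_union]; tauto
  have hinter : insert i t ∩ insert k t = t := by
    ext m
    simp only [Finset.mem_inter, Finset.mem_insert]
    constructor
    · rintro ⟨h1 | h1, h2 | h2⟩
      · exact absurd (h1.symm.trans h2) (fun h => hik h.symm)
      · exact absurd (h1 ▸ h2) hit
      · exact absurd (h2 ▸ h1) hkt
      · exact h1
    · intro hm; exact ⟨Or.inr hm, Or.inr hm⟩
  have hsubm := hsub (insert i t) (insert k t)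
  rw [hunion, hinter] at hsubm
  have hWnn : 0 ≤ W := by
    apply Finset.prod_nonneg
    intro m _
    by_cases hm : m ∈ t
    · simp [hm]; exact (hy m).1
    · simp [hm]; linarith [(hy m).2]
  have : h t + h (insert k t) + (h (insert i t) + h (insert i (insert k t))) =
      (W * (d k * d i)) *
        ((f (insert i (insert k t)) + f t) - (f (insert i t) + f (insert k t))) := by
    rw [e1, e2, e3, e4]; ring
  rw [this]
  apply mul_nonpos_of_nonneg_of_nonpos
  · exact mul_nonneg hWnn (mul_nonneg (hd k) (hd i))
  · linarith

theorem mlext_concave_along_nonneg_direction {E : Type*} [Fintype E] [DecidableEq E]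
    (f : Finset E → ℝ)
    (hsub : ∀ A B : Finset E, f A + f B ≥ f (A ∪ B) + f (A ∩ B))
    (x d : E → ℝ) (hx : ∀ i, 0 ≤ x i ∧ x i ≤ 1) (hd : ∀ i, 0 ≤ d i) :
    ConcaveOn ℝ {l : ℝ | ∀ i, 0 ≤ x i + l * d i ∧ x i + l * d i ≤ 1}
      (fun l => mlext f (fun i => x i + l * d i)) := by
  classical
  have aux_key := fun (y : E → ℝ) hy (i k : E) hki =>
    mlext_aux_key f hsub y d hy hd i k hki
  set D : Set ℝ := {l : ℝ | ∀ i, 0 ≤ x i + l * d i ∧ x i + l * d i ≤ 1} with hDdef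
  have hDconv : Convex ℝ D := by
    intro l1 hl1 l2 hl2 a c ha hc hac
    intro i
    obtain ⟨h1a, h1b⟩ := hl1 i
    obtain ⟨h2a, h2b⟩ := hl2 i
    have key : x i + (a • l1 + c • l2) * d i
        = a * (x i + l1 * d i) + c * (x i + l2 * d i) := by
      simp only [smul_eq_mul]
      linear_combination (-(x i)) * hac
    constructor
    · rw [key]
      exact add_nonneg (mul_nonneg ha h1a) (mul_nonneg hc h2a)
    · rw [key]
      nlinarith
  set q : Finset E → E → ℝ → ℝ :=
    fun S m l => if m ∈ S then x m + l * d m else 1 - (x m + l * d m) with hq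
  set b : Finset E → E → ℝ := fun S m => if m ∈ S then d m else -d m with hb
  have hfun : (fun l => mlext f (fun i => x i + l * d i))
      = fun l => ∑ S : Finset E, f S * ∏ m, q S m l := by
    funext l
    unfold mlext
    refine Finset.sum_congr rfl fun S _ => ?_
    rw [mul_assoc]
    congr 1
    rw [← Finset.prod_mul_prod_compl S (fun m => q S m l)]
    congr 1
    · exact Finset.prod_congr rfl fun m hm => by simp [hq, hm]
    · exact Finset.prod_congr rfl fun m hm => by simp [hq, Finset.mem_compl.mp hm]
  have hderiv_q : ∀ (S : Finset E) (m : E) (l : ℝ), HasDerivAt (fun l => q S m l) (b S m) l := by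
    intro S m l
    by_cases h : m ∈ S
    · simpa [hq, hb, h] using ((hasDerivAt_mul_const (d m)).const_add (x m))
    · simpa [hq, hb, h] using (((hasDerivAt_mul_const (d m)).const_add (x m)).const_sub 1)
  set g1 : ℝ → ℝ := fun l => ∑ S : Finset E,
      f S * ∑ m, (∏ j ∈ univ.erase m, q S j l) * b S m with hg1def
  set g2 : ℝ → ℝ := fun l => ∑ S : Finset E,
      f S * ∑ m, (∑ k ∈ univ.erase m, (∏ j ∈ (univ.erase m).erase k, q S j l) * b S k) * b S m
    with hg2def
  have hg1 : ∀ l, HasDerivAt (fun l => ∑ S : Finset E, f S * ∏ m, q S m l) (g1 l) l := by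
    intro l
    refine HasDerivAt.fun_sum fun S _ => ?_
    have := (HasDerivAt.fun_finsetProd (u := univ) (f := fun m => q S m)
      (f' := fun m => b S m) (fun m _ => hderiv_q S m l)).const_mul (f S)
    simpa [smul_eq_mul] using this
  have hg2 : ∀ l, HasDerivAt g1 (g2 l) l := by
    intro l
    refine HasDerivAt.fun_sum fun S _ => ?_
    refine HasDerivAt.const_mul (f S) ?_
    refine HasDerivAt.fun_sum fun m _ => ?_
    have := (HasDerivAt.fun_finsetProd (u := univ.erase m) (f := fun j => q S j)
      (f' := fun j => b S j) (fun j _ => hderiv_q S j l)).mul_const (b S m)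
    simpa [smul_eq_mul] using this
  have hcont : ContinuousOn (fun l => ∑ S : Finset E, f S * ∏ m, q S m l) D :=
    fun l _ => ((hg1 l).differentiableAt.continuousAt).continuousWithinAt
  have hnonpos : ∀ l ∈ interior D, g2 l ≤ 0 := by
    intro l hl
    have hl' : ∀ i, 0 ≤ x i + l * d i ∧ x i + l * d i ≤ 1 := interior_subset hl
    have hrw : g2 l = ∑ m : E, ∑ k ∈ univ.erase m, ∑ S : Finset E,
        f S * ((∏ j ∈ (univ.erase m).erase k, q S j l) * b S k * b S m) := by
      rw [hg2def]
      simp only [Finset.mul_sum, Finset.sum_mul]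
      rw [Finset.sum_comm]
      exact Finset.sum_congr rfl fun m _ => Finset.sum_comm
    rw [hrw]
    apply Finset.sum_nonpos
    intro m _
    apply Finset.sum_nonpos
    intro k hk
    have hkm : k ≠ m := (Finset.mem_erase.mp hk).1
    have := aux_key (fun j => x j + l * d j) hl' m k hkm
    simpa [hq, hb] using this
  rw [hfun]
  exact concaveOn_of_hasDerivWithinAt2_nonpos hDconv hcont
    (fun l _ => (hg1 l).hasDerivWithinAt) (fun l _ => (hg2 l).hasDerivWithinAt) hnonpos
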